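/- The Bargmann transform of the Hermite function h_n is a multiple of the monomial: B h_n(z) = (π^n/n!)^{1/2}·c·z^n for an explicit nonzero constant c, where h_n(t) = c_n e^{πt²} (d/dt)^n (e^{−2πt²}) with c_n chosen so that ‖h_n‖_{L²(ℝ)} = 1. -/

import Mathlib

open MeasureTheory Complex Real
open Filter Asymptotics Polynomial

lemma hasDerivAt_poly_gauss (P : Polynomial ℝ) (t : ℝ) :
    HasDerivAt (fun t : ℝ => P.eval t * Real.exp (-2 * π * t ^ 2))
      ((Polynomial.derivative P - Polynomial.C (4*π) * (Polynomial.X * P)).eval t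
        * Real.exp (-2 * π * t ^ 2)) t := by
  have h1 : HasDerivAt (fun t : ℝ => P.eval t) (P.derivative.eval t) t := P.hasDerivAt t
  have h2 : HasDerivAt (fun t : ℝ => -2 * π * t ^ 2) (-2 * π * (2 * t ^ 1)) t :=
    (hasDerivAt_pow 2 t).const_mul (-2 * π)
  have h3 := h2.exp
  have := h1.fun_mul h3
  refine this.congr_deriv ?_ |>.congr_of_eventuallyEq (Filter.Eventually.of_forall fun _ => rfl) ; symm
  simp only [Polynomial.eval_sub, Polynomial.eval_mul, Polynomial.eval_C, Polynomial.eval_X,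
    Polynomial.eval_pow]
  ring

lemma iter_gauss (n : ℕ) : ∃ P : Polynomial ℝ, ∀ t : ℝ,
    iteratedDeriv n (fun s : ℝ => Real.exp (-2 * π * s ^ 2)) t
      = P.eval t * Real.exp (-2 * π * t ^ 2) := by
  induction n with
  | zero => exact ⟨1, by simp [iteratedDeriv_zero]⟩
  | succ n ih =>
    obtain ⟨P, hP⟩ := ih
    refine ⟨Polynomial.derivative P - Polynomial.C (4*π) * (Polynomial.X * P), fun t => ?_⟩
    rw [iteratedDeriv_succ, funext hP, (hasDerivAt_poly_gauss P t).deriv]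

lemma iter_gauss_hasDerivAt (n : ℕ) (t : ℝ) :
    HasDerivAt (iteratedDeriv n (fun s : ℝ => Real.exp (-2 * π * s ^ 2)))
      (iteratedDeriv (n+1) (fun s : ℝ => Real.exp (-2 * π * s ^ 2)) t) t := by
  obtain ⟨P, hP⟩ := iter_gauss n
  rw [iteratedDeriv_succ, funext hP, (hasDerivAt_poly_gauss P t).deriv]
  exact hasDerivAt_poly_gauss P t

lemma int_pow_gauss (j : ℕ) : Integrable fun s : ℝ => s ^ j * Real.exp (-(2*π) * s ^ 2) := by
  have hj : (-1 : ℝ) < j := by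
    have := Nat.cast_nonneg (α := ℝ) j; linarith
  simpa [Real.rpow_natCast] using
    integrable_rpow_mul_exp_neg_mul_sq (b := 2*π) (by positivity) hj

lemma int_pow_lin_gauss (k : ℕ) (c : ℝ) :
    Integrable fun t : ℝ => t ^ k * Real.exp (-2*π*t^2 + c*t) := by
  set α : ℝ := c / (4*π) with hα
  have expand : Integrable fun s : ℝ => (s + α) ^ k * Real.exp (-(2*π) * s ^ 2) := by
    have he : (fun s : ℝ => (s + α) ^ k * Real.exp (-(2*π) * s ^ 2))
        = fun s => ∑ i ∈ Finset.range (k+1),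
            (α ^ (k-i) * (k.choose i)) * (s ^ i * Real.exp (-(2*π) * s ^ 2)) := by
      funext s
      rw [add_pow, Finset.sum_mul]
      exact Finset.sum_congr rfl fun i _ => by ring
    rw [he]
    exact integrable_finset_sum _ fun i _ => (int_pow_gauss i).const_mul _
  have shift := (expand.comp_sub_right α).const_mul (Real.exp (c^2/(8*π)))
  refine shift.congr (Filter.Eventually.of_forall fun t => ?_)
  have hπ : (π : ℝ) ≠ 0 := Real.pi_ne_zero
  show Real.exp (c^2/(8*π)) * ((t - α + α) ^ k * Real.exp (-(2*π) * (t - α) ^ 2))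
      = t ^ k * Real.exp (-2*π*t^2 + c*t)
  rw [sub_add_cancel]
  rw [mul_comm (Real.exp _), mul_assoc, ← Real.exp_add]
  congr 1
  rw [hα, Real.exp_eq_exp]
  field_simp
  ring

lemma abs_pow_le (t : ℝ) (i : ℕ) : |t| ^ i ≤ 1 + t ^ (2*i) := by
  have h2i : (0:ℝ) ≤ t ^ (2*i) := (even_two_mul i).pow_nonneg t
  rcases le_total |t| 1 with h | h
  · have := pow_le_one₀ (n := i) (abs_nonneg t) h
    linarith
  · have h1 : |t| ^ i ≤ |t| ^ (2*i) := pow_le_pow_right₀ h (by omega)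
    have h2 : |t| ^ (2*i) = t ^ (2*i) := by
      rw [← _root_.abs_pow, _root_.abs_of_nonneg h2i]
    nlinarith [abs_nonneg t]

lemma int_mono_cexp (i : ℕ) (z : ℂ) :
    Integrable fun t : ℝ => (t : ℂ) ^ i * Complex.exp (-2*π*(t:ℂ)^2 + 2*π*(t:ℂ)*z) := by
  have hbound : Integrable fun t : ℝ => (1 + t ^ (2*i)) * Real.exp (-2*π*t^2 + (2*π*z.re)*t) := by
    have h0 := int_pow_lin_gauss 0 (2*π*z.re)
    have h2 := int_pow_lin_gauss (2*i) (2*π*z.re)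
    refine (h0.add h2).congr (Filter.Eventually.of_forall fun t => ?_)
    simp; ring
  refine hbound.mono' ?_ (Filter.Eventually.of_forall fun t => ?_)
  · apply Continuous.aestronglyMeasurable
    fun_prop
  · have hre : (-2*π*(t:ℂ)^2 + 2*π*(t:ℂ)*z).re = -2*π*t^2 + (2*π*z.re)*t := by
      simp [Complex.add_re, Complex.mul_re, ← Complex.ofReal_pow]
      ring
    rw [norm_mul, norm_pow, Complex.norm_real, Complex.norm_exp, hre,
      Real.norm_eq_abs]
    exact mul_le_mul_of_nonneg_right (abs_pow_le t i) (Real.exp_pos _).le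

lemma int_poly_cexp (P : Polynomial ℝ) (z : ℂ) :
    Integrable fun t : ℝ => ((P.eval t : ℝ) : ℂ) * Complex.exp (-2*π*(t:ℂ)^2 + 2*π*(t:ℂ)*z) := by
  have he : (fun t : ℝ => ((P.eval t : ℝ) : ℂ) * Complex.exp (-2*π*(t:ℂ)^2 + 2*π*(t:ℂ)*z))
      = fun t : ℝ => ∑ i ∈ Finset.range (P.natDegree + 1),
          ((P.coeff i : ℝ) : ℂ) * ((t:ℂ)^i * Complex.exp (-2*π*(t:ℂ)^2 + 2*π*(t:ℂ)*z)) := by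
    funext t
    rw [Polynomial.eval_eq_sum_range]
    push_cast
    rw [Finset.sum_mul]
    exact Finset.sum_congr rfl fun i _ => by ring
  rw [he]
  exact integrable_finset_sum _ fun i _ => (int_mono_cexp i z).const_mul _

lemma decay_poly_cexp_atTop (P : Polynomial ℝ) (b : ℂ) :
    Tendsto (fun t : ℝ => ((P.eval t : ℝ) : ℂ) * Complex.exp (-2*π*(t:ℂ)^2 + b*(t:ℂ)))
      atTop (nhds 0) := by
  set d := P.natDegree with hd
  have h1 : (fun t : ℝ => P.eval t) =O[atTop] fun t => t ^ d := by
    have := Polynomial.isBigO_of_degree_le (P := P) (Q := Polynomial.X ^ d)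
      (by rw [Polynomial.degree_X_pow]; exact Polynomial.degree_le_natDegree)
    simpa using this
  have h1' : (fun t : ℝ => ((P.eval t : ℝ) : ℂ)) =O[atTop] fun t => t ^ d := by
    refine Asymptotics.IsBigO.of_norm_left ?_
    simpa [Complex.norm_real] using h1.norm_left
  have h2 : (fun t : ℝ => Complex.exp (-2*π*(t:ℂ)^2 + b*(t:ℂ))) =o[atTop]
      fun t : ℝ => t ^ (-(d:ℝ) - 1) := by
    have hre : ((-2*π : ℂ)).re < 0 := by
      simp [Complex.mul_re]
      positivity
    simpa using cexp_neg_quadratic_isLittleO_rpow_atTop hre b (-(d:ℝ) - 1)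
  have h3 := h1'.mul_isLittleO h2
  have h4 : (fun t : ℝ => t ^ d * t ^ (-(d:ℝ) - 1)) =ᶠ[atTop] fun t => t ^ (-1 : ℝ) := by
    filter_upwards [eventually_gt_atTop (0:ℝ)] with t ht
    rw [← Real.rpow_natCast t d, ← Real.rpow_add ht]
    rw [show ((d:ℝ) + (-(d:ℝ) - 1)) = -1 by ring]
  exact ((h3.congr' EventuallyEq.rfl h4).tendsto_zero_of_tendsto
    (tendsto_rpow_neg_atTop one_pos))

lemma decay_poly_cexp_atBot (P : Polynomial ℝ) (b : ℂ) :
    Tendsto (fun t : ℝ => ((P.eval t : ℝ) : ℂ) * Complex.exp (-2*π*(t:ℂ)^2 + b*(t:ℂ)))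
      atBot (nhds 0) := by
  have h := (decay_poly_cexp_atTop (P.comp (-Polynomial.X)) (-b)).comp tendsto_neg_atBot_atTop
  refine Tendsto.congr (fun t => ?_) h
  simp only [Function.comp_apply, Polynomial.eval_comp, Polynomial.eval_neg, Polynomial.eval_X]
  push_cast
  ring_nf

lemma base_integral (z : ℂ) :
    ∫ t : ℝ, Complex.exp (2*π*(t:ℂ)*z) * ((Real.exp (-2*π*t^2) : ℝ) : ℂ)
      = (1/2 : ℂ) ^ (1/2 : ℂ) * Complex.exp (π * z^2 / 2) := by
  have hπ : (π : ℂ) ≠ 0 := Complex.ofReal_ne_zero.mpr Real.pi_ne_zero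
  have he : (fun t : ℝ => Complex.exp (2*π*(t:ℂ)*z) * ((Real.exp (-2*π*t^2) : ℝ) : ℂ))
      = fun t : ℝ => Complex.exp ((-2*π : ℂ) * (t:ℂ)^2 + (2*π*z) * (t:ℂ) + 0) := by
    funext t
    rw [Complex.ofReal_exp, ← Complex.exp_add]
    push_cast
    ring_nf
  rw [he, integral_cexp_quadratic (by simp [Complex.mul_re]; positivity) _ _]
  congr 1
  · congr 1
    rw [show -(-2 * (π:ℂ)) = 2 * π by ring]
    rw [div_eq_div_iff (by simpa using hπ) two_ne_zero]
    ring
  · congr 1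
    field_simp
    ring

-- the cast identity
lemma cast_id (P : Polynomial ℝ) (z : ℂ)
    (f : ℝ → ℝ) (hP : ∀ t : ℝ, f t = P.eval t * Real.exp (-2 * π * t ^ 2)) :
    (fun t : ℝ => Complex.exp (2*π*(t:ℂ)*z) * ((f t : ℝ) : ℂ))
      = fun t : ℝ => ((P.eval t : ℝ) : ℂ) * Complex.exp (-2*π*(t:ℂ)^2 + 2*π*(t:ℂ)*z) := by
  funext t
  rw [hP t]
  push_cast [Complex.ofReal_exp]
  rw [Complex.exp_add]
  ring

lemma ibp (n : ℕ) (z : ℂ) :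
    ∫ t : ℝ, Complex.exp (2*π*(t:ℂ)*z)
        * ((iteratedDeriv (n+1) (fun s : ℝ => Real.exp (-2 * π * s ^ 2)) t : ℝ) : ℂ)
      = (-(2*π*z)) * ∫ t : ℝ, Complex.exp (2*π*(t:ℂ)*z)
        * ((iteratedDeriv n (fun s : ℝ => Real.exp (-2 * π * s ^ 2)) t : ℝ) : ℂ) := by
  obtain ⟨P, hP⟩ := iter_gauss n
  obtain ⟨Q, hQ⟩ := iter_gauss (n+1)
  set g : ℝ → ℝ := fun s : ℝ => Real.exp (-2 * π * s ^ 2) with hg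
  have hFn := cast_id P z _ hP
  have hFn1 := cast_id Q z _ hQ
  have intn : Integrable (fun t : ℝ => Complex.exp (2*π*(t:ℂ)*z) * ((iteratedDeriv n g t : ℝ) : ℂ)) := by
    rw [hFn]; exact int_poly_cexp P z
  have intn1 : Integrable (fun t : ℝ => Complex.exp (2*π*(t:ℂ)*z) * ((iteratedDeriv (n+1) g t : ℝ) : ℂ)) := by
    rw [hFn1]; exact int_poly_cexp Q z
  have hderiv : ∀ t : ℝ, HasDerivAt
      (fun t : ℝ => Complex.exp (2*π*(t:ℂ)*z) * ((iteratedDeriv n g t : ℝ) : ℂ))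
      ((2*π*z) * (Complex.exp (2*π*(t:ℂ)*z) * ((iteratedDeriv n g t : ℝ) : ℂ))
        + Complex.exp (2*π*(t:ℂ)*z) * ((iteratedDeriv (n+1) g t : ℝ) : ℂ)) t := by
    intro t
    have hc : HasDerivAt (fun t : ℝ => Complex.exp (2*π*(t:ℂ)*z))
        (Complex.exp (2*π*(t:ℂ)*z) * (2*π*z)) t := by
      have hl : HasDerivAt (fun t : ℝ => 2*π*(t:ℂ)*z) (2*π*z) t := by
        have h0 : HasDerivAt (fun t : ℝ => (t : ℂ)) 1 t :=
          Complex.ofRealCLM.hasDerivAt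
        have heq : (fun t : ℝ => 2*π*(t:ℂ)*z) = fun t : ℝ => (2*π*z) * (t:ℂ) := by
          funext t; ring
        rw [heq]
        simpa using h0.const_mul (2*π*z)
      exact hl.cexp
    have hr : HasDerivAt (fun t : ℝ => ((iteratedDeriv n g t : ℝ) : ℂ))
        ((iteratedDeriv (n+1) g t : ℝ) : ℂ) t :=
      (iter_gauss_hasDerivAt n t).ofReal_comp
    have := hc.fun_mul hr
    refine this.congr_deriv ?_ |>.congr_of_eventuallyEq (Filter.Eventually.of_forall fun _ => rfl) ; symm
    ring
  have hf'int : Integrable (fun t : ℝ =>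
      (2*π*z) * (Complex.exp (2*π*(t:ℂ)*z) * ((iteratedDeriv n g t : ℝ) : ℂ))
        + Complex.exp (2*π*(t:ℂ)*z) * ((iteratedDeriv (n+1) g t : ℝ) : ℂ)) :=
    (intn.const_mul _).add intn1
  have htop : Tendsto (fun t : ℝ => Complex.exp (2*π*(t:ℂ)*z) * ((iteratedDeriv n g t : ℝ) : ℂ))
      atTop (nhds 0) := by
    rw [hFn]; exact decay_poly_cexp_atTop P (2*π*z) |>.congr (fun t => by ring_nf)
  have hbot : Tendsto (fun t : ℝ => Complex.exp (2*π*(t:ℂ)*z) * ((iteratedDeriv n g t : ℝ) : ℂ))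
      atBot (nhds 0) := by
    rw [hFn]; exact decay_poly_cexp_atBot P (2*π*z) |>.congr (fun t => by ring_nf)
  have key := integral_of_hasDerivAt_of_tendsto hderiv hf'int hbot htop
  rw [sub_zero] at key
  rw [integral_add (intn.const_mul _) intn1, MeasureTheory.integral_const_mul] at key
  linear_combination key

lemma main_integral (n : ℕ) (z : ℂ) :
    ∫ t : ℝ, Complex.exp (2*π*(t:ℂ)*z)
        * ((iteratedDeriv n (fun s : ℝ => Real.exp (-2 * π * s ^ 2)) t : ℝ) : ℂ)
      = (-(2*π*z))^n * ((1/2 : ℂ) ^ (1/2 : ℂ) * Complex.exp (π * z^2 / 2)) := by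
  induction n with
  | zero =>
    simpa [iteratedDeriv_zero] using base_integral z
  | succ n ih =>
    rw [ibp n z, ih]
    ring

/-- the Bargmann transform of the n-th (L²-normalized) Hermite function
h_n(t) = c_n e^{πt²} (d/dt)^n e^{−2πt²} is a multiple of the monomial:
B h_n(z) = (π^n/n!)^{1/2} · c · z^n for some nonzero constant c. -/
theorem bargmann_of_hermite (n : ℕ) (cn : ℝ)
    (h : ℝ → ℝ)
    (hdef : ∀ t : ℝ, h t = cn * Real.exp (π * t ^ 2) *
      iteratedDeriv n (fun s : ℝ => Real.exp (-2 * π * s ^ 2)) t)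
    (hnorm : ∫ t : ℝ, h t ^ 2 = 1) :
    ∃ c : ℂ, c ≠ 0 ∧ ∀ z : ℂ,
      (∫ t : ℝ, (h t : ℂ) *
          Complex.exp (2 * π * (t : ℂ) * z - π * (t : ℂ) ^ 2 - π * z ^ 2 / 2)) =
        (Real.sqrt (π ^ n / n.factorial) : ℂ) * c * z ^ n := by
  have hcn : cn ≠ 0 := by
    intro h0
    have hz : ∀ t : ℝ, h t = 0 := fun t => by simp [hdef t, h0]
    rw [show (fun t : ℝ => h t ^ 2) = fun _ => (0:ℝ) from funext fun t => by simp [hz t]] at hnorm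
    simp at hnorm
  have hsqrt : (Real.sqrt (π ^ n / n.factorial) : ℝ) ≠ 0 := by
    rw [Real.sqrt_ne_zero']
    positivity
  have hK : ((1/2 : ℂ) ^ (1/2 : ℂ)) ≠ 0 := by
    intro h0
    rw [Complex.cpow_eq_zero_iff] at h0
    norm_num at h0
  refine ⟨((cn : ℂ) * (-(2*π))^n * (1/2 : ℂ) ^ (1/2 : ℂ)) / ((Real.sqrt (π ^ n / n.factorial) : ℝ) : ℂ), ?_, fun z => ?_⟩
  · apply div_ne_zero
    · refine mul_ne_zero (mul_ne_zero ?_ ?_) hK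
      · exact_mod_cast Complex.ofReal_ne_zero.mpr hcn
      · apply pow_ne_zero
        simpa using Complex.ofReal_ne_zero.mpr Real.pi_ne_zero
    · exact Complex.ofReal_ne_zero.mpr hsqrt
  · have hrw : (fun t : ℝ => (h t : ℂ) *
        Complex.exp (2 * π * (t : ℂ) * z - π * (t : ℂ) ^ 2 - π * z ^ 2 / 2))
        = fun t : ℝ => ((cn : ℂ) * Complex.exp (-(π * z^2/2))) *
            (Complex.exp (2*π*(t:ℂ)*z)
              * ((iteratedDeriv n (fun s : ℝ => Real.exp (-2 * π * s ^ 2)) t : ℝ) : ℂ)) := by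
      funext t
      rw [hdef t]
      push_cast [Complex.ofReal_exp]
      rw [show (2 * π * (t:ℂ) * z - π * (t:ℂ) ^ 2 - π * z ^ 2 / 2)
          = (2*π*(t:ℂ)*z) + (-(π * z^2/2)) + (-(π * (t:ℂ)^2)) by ring]
      rw [Complex.exp_add, Complex.exp_add]
      rw [show (π * (t:ℂ)^2 : ℂ) = ((π * t^2 : ℝ) : ℂ) by push_cast; ring,
        ]
      have hone : Complex.exp (((π * t^2 : ℝ)) : ℂ) * Complex.exp (-(((π * t^2 : ℝ)) : ℂ)) = 1 := by
        rw [← Complex.exp_add]; simp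
      linear_combination ((cn : ℂ) *
        ((iteratedDeriv n (fun s : ℝ => Real.exp (-2*π*s^2)) t : ℝ) : ℂ) *
        Complex.exp (2*π*(t:ℂ)*z) * Complex.exp (-(π * z^2/2))) * hone
    rw [hrw, MeasureTheory.integral_const_mul, main_integral n z]
    have hexp : Complex.exp (-(π * z^2/2)) * Complex.exp (π * z^2 / 2) = 1 := by
      rw [← Complex.exp_add]; simp
    rw [show (-(2*π*z) : ℂ) = (-(2*π)) * z by ring, mul_pow]
    rw [mul_comm ((Real.sqrt (π ^ n / n.factorial) : ℝ) : ℂ), div_mul_eq_mul_div,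
      div_mul_eq_mul_div, eq_div_iff (Complex.ofReal_ne_zero.mpr hsqrt)]
    linear_combination ((cn : ℂ) * (-(2*π))^n * z^n * ((1/2 : ℂ) ^ (1/2 : ℂ))
      * ((Real.sqrt (π ^ n / n.factorial) : ℝ) : ℂ)) * hexp
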